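/- Let m be a positive integer and G a finite group in which every element of prime power order lies in a conjugacy class of size at most m. Then the derived subgroup G' is of order bounded by a function of m only. -/

import Mathlib

open Subgroup MulAction
open scoped commutatorElement

set_option linter.unusedSectionVars false

variable {G : Type} [Group G] [Finite G]

lemma conjClass_card_eq (x : G) :
    Nat.card {h : G // IsConj x h} = (Subgroup.centralizer {x}).index := by
  have h1 : {h : G | IsConj x h} = MulAction.orbit (ConjAct G) x := by
    ext h
    rw [ConjAct.mem_orbit_conjAct]
    exact isConj_comm
  have e : {h : G // IsConj x h} ≃ MulAction.orbit (ConjAct G) x := Equiv.setCongr h1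
  rw [Nat.card_congr e,
    Nat.card_congr (MulAction.orbitEquivQuotientStabilizer (ConjAct G) x),
    Subgroup.centralizer_eq_comap_stabilizer]
  exact (Subgroup.index_comap_of_surjective _ (MulEquiv.surjective _)).symm

lemma commute_of_big_prime {m p k : ℕ} (hp : p.Prime) (hmp : m < p) {u g : G}
    (hu : orderOf u = p ^ k)
    (hg : (Subgroup.centralizer {g}).index ≤ m) : Commute u g := by
  set v : ConjAct G := ConjAct.toConjAct u with hv
  set S : Subgroup (ConjAct G) := Subgroup.zpowers v with hS
  have hcardS : Nat.card S = p ^ k := by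
    rw [hS, Nat.card_zpowers, hv]
    rw [show orderOf (ConjAct.toConjAct u) =
        orderOf ((ConjAct.toConjAct : G ≃* ConjAct G).toMonoidHom u) from rfl,
      orderOf_injective _ (MulEquiv.injective _) u]
    exact hu
  have horb_dvd : Nat.card (MulAction.orbit S g) ∣ p ^ k := by
    rw [Nat.card_congr (MulAction.orbitEquivQuotientStabilizer S g), ← hcardS,
      ← Subgroup.index_eq_card]
    exact Subgroup.index_dvd_card _
  have horb_le : Nat.card (MulAction.orbit S g) ≤ m := by
    have hinj : Function.Injective
        (fun w : MulAction.orbit S g => (⟨(w : G), by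
          obtain ⟨w, s, rfl⟩ := w
          simp only [ConjAct.smul_def]
          exact isConj_iff.2 ⟨ConjAct.ofConjAct (s : ConjAct G), rfl⟩⟩ :
          {h : G // IsConj g h})) := by
      intro w w' h
      apply Subtype.ext
      exact congrArg (Subtype.val : {h : G // IsConj g h} → G) h
    calc Nat.card (MulAction.orbit S g) ≤ Nat.card {h : G // IsConj g h} :=
          Nat.card_le_card_of_injective _ hinj
      _ = (Subgroup.centralizer {g}).index := conjClass_card_eq g
      _ ≤ m := hg
  have h1 : Nat.card (MulAction.orbit S g) = 1 := by
    obtain ⟨j, hj, hje⟩ := (Nat.dvd_prime_pow hp).1 horb_dvd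
    rcases Nat.eq_zero_or_pos j with rfl | hjpos
    · simpa using hje
    · exfalso
      have h2 : p ≤ p ^ j := Nat.le_self_pow hjpos.ne' p
      rw [hje] at horb_le
      omega
  obtain ⟨hsub, -⟩ := Nat.card_eq_one_iff_unique.1 h1
  have hmem : v • g ∈ MulAction.orbit S g := by
    have := MulAction.mem_orbit g (⟨v, Subgroup.mem_zpowers v⟩ : S)
    simpa using this
  have heq : v • g = g := by
    have := Subsingleton.elim (⟨v • g, hmem⟩ : MulAction.orbit S g)
      ⟨g, MulAction.mem_orbit_self g⟩
    exact congrArg Subtype.val this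
  rw [hv, ConjAct.toConjAct_smul] at heq
  exact mul_inv_eq_iff_eq_mul.1 heq



lemma coprime_of_modEq_one {a e : ℕ} (h : e ≡ 1 [MOD a]) : Nat.Coprime a e := by
  match a with
  | 0 =>
    have : e = 1 := by simpa [Nat.ModEq] using h
    simp [this]
  | 1 => exact Nat.coprime_one_left e
  | (a+2) =>
    have he : e % (a+2) = 1 % (a+2) := h
    have h1 : e % (a+2) = 1 := by
      rw [he, Nat.mod_eq_of_lt (by omega)]
    unfold Nat.Coprime
    rw [Nat.gcd_rec (a+2) e, h1, Nat.gcd_one_left]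

variable {G : Type} [Group G] [Finite G]

lemma primary_split (x : G) {p : ℕ} (hp : p.Prime) (hdvd : p ∣ orderOf x) :
    ∃ y z : G, y * z = x ∧ Commute y z ∧
      orderOf y = p ^ ((orderOf x).factorization p) ∧
      orderOf z = orderOf x / p ^ ((orderOf x).factorization p) := by
  have hn0 : orderOf x ≠ 0 := (orderOf_pos x).ne'
  set n := orderOf x with hn
  set k := n.factorization p with hk
  set q := p ^ k with hq
  set r := n / q with hr
  have hqr : q * r = n := Nat.ordProj_mul_ordCompl_eq_self n p
  have hkpos : 0 < k := hp.factorization_pos_of_dvd hn0 hdvd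
  have hqpos : 0 < q := Nat.ordProj_pos n p
  have hr0 : 0 < r := Nat.ordCompl_pos p hn0
  have hcop : Nat.Coprime q r := (Nat.coprime_ordCompl hp hn0).pow_left k
  obtain ⟨e, he1, he2⟩ := Nat.chineseRemainder hcop.symm 0 1
  obtain ⟨f, hf1, hf2⟩ := Nat.chineseRemainder hcop.symm 1 0
  -- he1 : e ≡ 0 [MOD r], he2 : e ≡ 1 [MOD q], hf1 : f ≡ 1 [MOD r], hf2 : f ≡ 0 [MOD q]
  have hqe : Nat.Coprime q e := coprime_of_modEq_one he2
  have hre : r ∣ e := (Nat.modEq_zero_iff_dvd).1 he1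
  have hrf : Nat.Coprime r f := coprime_of_modEq_one hf1
  have hqf : q ∣ f := (Nat.modEq_zero_iff_dvd).1 hf2
  refine ⟨x ^ e, x ^ f, ?_, (Commute.refl x).pow_pow e f, ?_, ?_⟩
  · rw [← pow_add]
    conv_rhs => rw [← pow_one x]
    rw [pow_eq_pow_iff_modEq, ← hn, ← hqr]
    refine (Nat.modEq_and_modEq_iff_modEq_mul hcop).1 ⟨?_, ?_⟩
    · simpa using he2.add hf2
    · simpa using he1.add hf1
  · rw [orderOf_pow, ← hn]
    have : n.gcd e = r := by
      rw [← hqr, Nat.Coprime.gcd_mul_left_cancel r hqe, Nat.gcd_eq_left hre]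
    rw [this, ← hqr, Nat.mul_div_cancel _ hr0]
  · rw [orderOf_pow, ← hn]
    have : n.gcd f = q := by
      rw [← hqr, mul_comm q r, Nat.Coprime.gcd_mul_left_cancel q hrf,
        Nat.gcd_eq_left hqf]
    rw [this, ← hqr, Nat.mul_div_cancel_left _ hqpos]
variable {G : Type} [Group G] [Finite G]

lemma commute_all {m : ℕ} (hyp : ∀ x : G, IsPrimePow (orderOf x) →
      (Subgroup.centralizer {x}).index ≤ m)
    {p k : ℕ} (hp : p.Prime) (hmp : m < p) {u : G} (hu : orderOf u = p ^ k) (g : G) :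
    Commute u g := by
  have H : ∀ N : ℕ, ∀ g : G, orderOf g = N → Commute u g := by
    intro N
    induction N using Nat.strong_induction_on with
    | _ N ih =>
      intro g hg
      have hN0 : N ≠ 0 := by rw [← hg]; exact (orderOf_pos g).ne'
      rcases eq_or_ne N 1 with rfl | hN1
      · have : g = 1 := orderOf_eq_one_iff.1 hg
        simp [this]
      by_cases hpp : IsPrimePow N
      · exact commute_of_big_prime hp hmp hu (hyp g (hg ▸ hpp))
      · -- split g
        have hdvd : N.minFac ∣ orderOf g := hg ▸ N.minFac_dvd
        have hpfac : N.minFac.Prime := Nat.minFac_prime hN1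
        obtain ⟨y, z, hyz, -, hy, hz⟩ := primary_split g hpfac hdvd
        rw [hg] at hy hz
        set q := N.minFac ^ (N.factorization N.minFac) with hqdef
        have hq1 : 1 < q := by
          calc 1 < N.minFac := hpfac.one_lt
          _ ≤ q := Nat.le_self_pow
              (hpfac.factorization_pos_of_dvd hN0 N.minFac_dvd).ne' _
        have hqN : q ∣ N := Nat.ordProj_dvd N N.minFac
        have hqltN : q < N := by
          rcases lt_or_eq_of_le (Nat.le_of_dvd (Nat.pos_of_ne_zero hN0) hqN) with h | h
          · exact h
          · exfalso
            exact hpp ⟨N.minFac, N.factorization N.minFac, hpfac.prime,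
              hpfac.factorization_pos_of_dvd hN0 N.minFac_dvd, h⟩
        have hrltN : N / q < N := Nat.div_lt_self (Nat.pos_of_ne_zero hN0) hq1
        have h1 := ih q hqltN y hy
        have h2 := ih (N / q) hrltN z hz
        rw [← hyz]
        exact h1.mul_right h2
  exact H (orderOf g) g rfl

lemma index_centralizer_le {m : ℕ}
    (hyp : ∀ x : G, IsPrimePow (orderOf x) → (Subgroup.centralizer {x}).index ≤ m)
    (x : G) :
    (Subgroup.centralizer {x}).index ≤
      m ^ (((orderOf x).primeFactors.filter (· ≤ m)).card) := by
  have H : ∀ N : ℕ, ∀ x : G, orderOf x = N →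
      (Subgroup.centralizer {x}).index ≤ m ^ ((N.primeFactors.filter (· ≤ m)).card) := by
    intro N
    induction N using Nat.strong_induction_on with
    | _ N ih =>
      intro x hx
      have hN0 : N ≠ 0 := by rw [← hx]; exact (orderOf_pos x).ne'
      rcases eq_or_ne N 1 with rfl | hN1
      · have hx1 : x = 1 := orderOf_eq_one_iff.1 hx
        have htop : Subgroup.centralizer {x} = ⊤ := by
          rw [hx1]
          refine (Subgroup.eq_top_iff' _).2 fun g => Subgroup.mem_centralizer_iff.2 ?_
          simp
        rw [htop, Subgroup.index_top]
        simp
      by_cases hpp : IsPrimePow N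
      · -- N = p^k
        obtain ⟨p, k, hp, hk, hpk⟩ := hpp
        have hp' : p.Prime := hp.nat_prime
        have hfac : N.primeFactors = {p} := by
          rw [← hpk]; exact Nat.primeFactors_prime_pow hk.ne' hp'
        by_cases hpm : p ≤ m
        · have h1 := hyp x (by rw [hx]; exact ⟨p, k, hp, hk, hpk⟩)
          refine h1.trans ?_
          have : (N.primeFactors.filter (· ≤ m)).card = 1 := by
            rw [hfac]
            rw [Finset.filter_singleton]
            simp [hpm]
          rw [this, pow_one]
        · -- p > m : x is central
          push_neg at hpm
          have hcomm := commute_all hyp hp' hpm (hx.trans hpk.symm)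
          have htop : Subgroup.centralizer {x} = ⊤ := by
            refine (Subgroup.eq_top_iff' _).2 fun g => Subgroup.mem_centralizer_iff.2 ?_
            intro s hs
            rw [Set.mem_singleton_iff] at hs
            subst hs
            exact (hcomm g).eq
          rw [htop, Subgroup.index_top]
          have hcard0 : (N.primeFactors.filter (· ≤ m)).card = 0 := by
            rw [hfac, Finset.filter_singleton, if_neg (not_le.2 hpm)]
            rfl
          rw [hcard0, pow_zero]
      · -- composite: split
        have hdvd : N.minFac ∣ orderOf x := hx ▸ N.minFac_dvd
        have hpfac : N.minFac.Prime := Nat.minFac_prime hN1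
        obtain ⟨y, z, hyz, -, hy, hz⟩ := primary_split x hpfac hdvd
        rw [hx] at hy hz
        set p := N.minFac with hpdef
        set q := p ^ (N.factorization p) with hqdef
        set r := N / q with hrdef
        have hkpos : 0 < N.factorization p :=
          hpfac.factorization_pos_of_dvd hN0 N.minFac_dvd
        have hq1 : 1 < q := by
          calc 1 < p := hpfac.one_lt
          _ ≤ q := Nat.le_self_pow hkpos.ne' _
        have hqN : q ∣ N := Nat.ordProj_dvd N p
        have hqr : q * r = N := Nat.ordProj_mul_ordCompl_eq_self N p
        have hr0 : 0 < r := Nat.ordCompl_pos p hN0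
        have hqltN : q < N := by
          rcases lt_or_eq_of_le (Nat.le_of_dvd (Nat.pos_of_ne_zero hN0) hqN) with h | h
          · exact h
          · exact absurd ⟨p, N.factorization p, hpfac.prime, hkpos, h⟩ hpp
        have hrltN : r < N := Nat.div_lt_self (Nat.pos_of_ne_zero hN0) hq1
        have h1 := ih q hqltN y hy
        have h2 := ih r hrltN z hz
        -- centralizer of x contains the intersection
        have hle : Subgroup.centralizer {y} ⊓ Subgroup.centralizer {z} ≤
            Subgroup.centralizer {x} := by
          intro g hg
          rw [Subgroup.mem_inf] at hg
          obtain ⟨hg1, hg2⟩ := hg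
          rw [Subgroup.mem_centralizer_iff] at hg1 hg2 ⊢
          intro s hs
          rw [Set.mem_singleton_iff] at hs
          subst hs
          rw [← hyz, mul_assoc, hg2 z rfl, ← mul_assoc, hg1 y rfl, mul_assoc]
        have hcards : ((q.primeFactors.filter (· ≤ m)).card +
            (r.primeFactors.filter (· ≤ m)).card) = (N.primeFactors.filter (· ≤ m)).card := by
          have hfq : q.primeFactors = {p} :=
            Nat.primeFactors_prime_pow hkpos.ne' hpfac
          have hpr : p ∉ r.primeFactors := by
            intro hmem
            have hdr : p ∣ r := Nat.dvd_of_mem_primeFactors hmem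
            have hcop : Nat.Coprime p r := Nat.coprime_ordCompl hpfac hN0
            have : p ∣ 1 := hcop ▸ Nat.dvd_gcd dvd_rfl hdr
            exact Nat.Prime.one_lt hpfac |>.ne' (Nat.eq_one_of_dvd_one this)
          have hdisj : Disjoint q.primeFactors r.primeFactors := by
            rw [hfq, Finset.disjoint_singleton_left]
            exact hpr
          have hunion : N.primeFactors = q.primeFactors ∪ r.primeFactors := by
            rw [← hqr]
            exact Nat.primeFactors_mul (by positivity) hr0.ne'
          rw [hunion, Finset.filter_union,
            Finset.card_union_of_disjoint (Finset.disjoint_filter_filter hdisj)]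
        calc (Subgroup.centralizer {x}).index
            ≤ (Subgroup.centralizer {y} ⊓ Subgroup.centralizer {z}).index :=
              Subgroup.index_antitone hle
          _ ≤ (Subgroup.centralizer {y}).index * (Subgroup.centralizer {z}).index :=
              Subgroup.index_inf_le
          _ ≤ m ^ ((q.primeFactors.filter (· ≤ m)).card) *
              m ^ ((r.primeFactors.filter (· ≤ m)).card) := Nat.mul_le_mul h1 h2
          _ = m ^ ((N.primeFactors.filter (· ≤ m)).card) := by rw [← pow_add, hcards]
  exact H (orderOf x) x rfl

lemma comm_fst {x y d : G} (h : Commute d y) : ⁅x*d, y⁆ = ⁅x, y⁆ := by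
  have hdy : d * y * d⁻¹ = y := by rw [h.eq, mul_inv_cancel_right]
  have step : ⁅x*d, y⁆ = x * (d * y * d⁻¹) * x⁻¹ * y⁻¹ := by group
  rw [step, hdy, commutatorElement_def]

lemma comm_snd {x y d : G} (h : Commute d x) : ⁅x, y*d⁆ = ⁅x, y⁆ := by
  have hdx : d * x⁻¹ * d⁻¹ = x⁻¹ := by rw [h.inv_right.eq, mul_inv_cancel_right]
  have step : ⁅x, y*d⁆ = x * y * (d * x⁻¹ * d⁻¹) * y⁻¹ := by group
  rw [step, hdx, commutatorElement_def]

lemma commutatorSet_card_le {n : ℕ} (hn : 0 < n)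
    (hall : ∀ x : G, (Subgroup.centralizer {x}).index ≤ n) :
    Nat.card (commutatorSet G) ≤ n ^ 5 := by
  classical
  set A := Nat.card G with hAdef
  have hA : 0 < A := Nat.card_pos
  set B := n ^ 5 with hBdef
  have hB : 0 < B := pow_pos hn 5
  set q := (A ^ 2 + B - 1) / B with hqdef
  have hA2 : 1 ≤ A ^ 2 := Nat.one_le_pow _ _ hA
  have hq1 : 1 ≤ q := by
    rw [hqdef, Nat.le_div_iff_mul_le hB]
    omega
  have hqB : A ^ 2 ≤ q * B := by
    have h := Nat.lt_div_mul_add (a := A ^ 2 + B - 1) hB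
    rw [← hqdef] at h
    omega
  -- Step 1 : for each commutator value, many pairs realize it
  have key : ∀ c : commutatorSet G, ∃ φ : Fin q → G × G,
      Function.Injective φ ∧ ∀ i, ⁅(φ i).1, (φ i).2⁆ = (c : G) := by
    rintro ⟨c, a, b, rfl⟩
    set D := Subgroup.centralizer {a} ⊓ Subgroup.centralizer {b} with hDdef
    -- commuting pairs in D
    set CP := {pr : D × D // Commute pr.1 pr.2} with hCPdef
    have hDcard : A ≤ Nat.card D * n ^ 2 := by
      have h1 : Nat.card D * D.index = A := Subgroup.card_mul_index D
      have h2 : D.index ≤ n ^ 2 := by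
        calc D.index ≤ (Subgroup.centralizer {a}).index *
            (Subgroup.centralizer {b}).index := Subgroup.index_inf_le
          _ ≤ n * n := Nat.mul_le_mul (hall a) (hall b)
          _ = n ^ 2 := (sq n).symm
      calc A = Nat.card D * D.index := h1.symm
        _ ≤ Nat.card D * n ^ 2 := Nat.mul_le_mul_left _ h2
    -- fibers of CP are large
    have hfiber : ∀ d : D, Nat.card D ≤ Nat.card {e : D // Commute d e} * n := by
      intro d
      have hequiv : {e : D // Commute d e} ≃ (Subgroup.centralizer {d} : Subgroup D) := by
        refine Equiv.subtypeEquivRight fun e => ?_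
        rw [Subgroup.mem_centralizer_iff]
        constructor
        · intro h
          intro s hs
          rw [Set.mem_singleton_iff] at hs
          subst hs
          exact h.eq
        · intro h
          exact h d rfl
      have hsub : (Subgroup.centralizer {d} : Subgroup D) =
          (Subgroup.centralizer {(d : G)}).subgroupOf D := by
        ext e
        simp only [Subgroup.mem_subgroupOf, Subgroup.mem_centralizer_iff,
          Set.mem_singleton_iff, forall_eq]
        constructor
        · intro h
          have := congrArg (Subtype.val : D → G) h
          simpa using this
        · intro h
          exact Subtype.ext (by simpa using h)
      have hidx : (Subgroup.centralizer {d} : Subgroup D).index ≤ n := by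
        rw [hsub]
        have hne : (Subgroup.centralizer {(d : G)}).relIndex ⊤ ≠ 0 := by
          rw [Subgroup.relIndex_top_right]
          exact Subgroup.index_ne_zero_of_finite
        have h2 := Subgroup.relIndex_le_of_le_right (K := D)
          (H := Subgroup.centralizer {(d : G)}) le_top hne
        rw [Subgroup.relIndex_top_right] at h2
        exact h2.trans (hall (d : G))
      have hcm := Subgroup.card_mul_index (Subgroup.centralizer {d} : Subgroup D)
      rw [Nat.card_congr hequiv]
      calc Nat.card D = Nat.card (Subgroup.centralizer {d} : Subgroup D) *
            (Subgroup.centralizer {d} : Subgroup D).index := hcm.symm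
        _ ≤ _ * n := Nat.mul_le_mul_left _ hidx
    -- total: CP * n ≥ (card D)^2
    have hCP : Nat.card D * Nat.card D ≤ Nat.card CP * n := by
      haveI : Fintype D := Fintype.ofFinite _
      have hsig : Nat.card CP = ∑ d : D, Nat.card {e : D // Commute d e} := by
        rw [Nat.card_congr (Equiv.subtypeProdEquivSigmaSubtype
          (fun (d e : D) => Commute d e)), Nat.card_eq_fintype_card,
          Fintype.card_sigma]
        congr 1
        ext d
        rw [Nat.card_eq_fintype_card]
      rw [hsig, Finset.sum_mul]
      calc Nat.card D * Nat.card D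
          = ∑ _d : D, Nat.card D := by
            rw [Finset.sum_const, Finset.card_univ, smul_eq_mul,
              Nat.card_eq_fintype_card]
        _ ≤ ∑ d : D, Nat.card {e : D // Commute d e} * n :=
            Finset.sum_le_sum fun d _ => hfiber d
    -- CP * B ≥ A^2
    have hCPB : A ^ 2 ≤ Nat.card CP * B := by
      have h1 : A ^ 2 ≤ (Nat.card D * n ^ 2) * (Nat.card D * n ^ 2) := by
        rw [sq]
        exact Nat.mul_le_mul hDcard hDcard
      have h2 : (Nat.card D * n ^ 2) * (Nat.card D * n ^ 2)
          = (Nat.card D * Nat.card D) * n ^ 4 := by ring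
      have h3 : (Nat.card D * Nat.card D) * n ^ 4 ≤ (Nat.card CP * n) * n ^ 4 :=
        Nat.mul_le_mul_right _ hCP
      have h4 : (Nat.card CP * n) * n ^ 4 = Nat.card CP * B := by
        rw [hBdef]; ring
      omega
    have hqCP : q ≤ Nat.card CP := by
      have h1 : A ^ 2 + B - 1 ≤ (B - 1) + Nat.card CP * B := by omega
      calc q ≤ ((B - 1) + Nat.card CP * B) / B := Nat.div_le_div_right h1
        _ = Nat.card CP := by
            rw [Nat.add_mul_div_right _ _ hB, Nat.div_eq_of_lt (by omega), zero_add]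
    -- embedding of Fin q into CP
    haveI : Fintype CP := Fintype.ofFinite _
    obtain ⟨emb⟩ : Nonempty (Fin q ↪ CP) := by
      rw [Function.Embedding.nonempty_iff_card_le, Fintype.card_fin,
        ← Nat.card_eq_fintype_card]
      exact hqCP
    refine ⟨fun i => (a * ((emb i).1.1 : G), b * ((emb i).1.2 : G)), ?_, ?_⟩
    · intro i j hij
      have h1 : ((emb i).1.1 : G) = ((emb j).1.1 : G) :=
        mul_left_cancel (congrArg Prod.fst hij)
      have h2 : ((emb i).1.2 : G) = ((emb j).1.2 : G) :=
        mul_left_cancel (congrArg Prod.snd hij)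
      have : emb i = emb j := by
        apply Subtype.ext
        exact Prod.ext (Subtype.ext h1) (Subtype.ext h2)
      exact emb.injective this
    · intro i
      set d₁ : D := (emb i).1.1 with hd₁def
      set d₂ : D := (emb i).1.2 with hd₂def
      have hcomm12 : Commute d₁ d₂ := (emb i).2
      -- collect commuting facts
      have hmem1 : (d₁ : G) ∈ Subgroup.centralizer {a} ⊓ Subgroup.centralizer {b} := d₁.2
      have hmem2 : (d₂ : G) ∈ Subgroup.centralizer {a} ⊓ Subgroup.centralizer {b} := d₂.2
      obtain ⟨h1a, h1b⟩ := Subgroup.mem_inf.mp hmem1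
      obtain ⟨h2a, h2b⟩ := Subgroup.mem_inf.mp hmem2
      have hbd₁ : Commute b (d₁ : G) := Subgroup.mem_centralizer_iff.1 h1b b rfl
      have had₂ : Commute a (d₂ : G) := Subgroup.mem_centralizer_iff.1 h2a a rfl
      have h12 : Commute (d₁ : G) (d₂ : G) := by
        have := congrArg (Subtype.val : D → G) hcomm12.eq
        exact (by simpa using this : (d₁ : G) * d₂ = d₂ * d₁)
      show ⁅a * (d₁ : G), b * (d₂ : G)⁆ = ⁅a, b⁆
      calc ⁅a * (d₁ : G), b * (d₂ : G)⁆ = ⁅a, b * (d₂ : G)⁆ :=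
            comm_fst (hbd₁.symm.mul_right h12)
        _ = ⁅a, b⁆ := comm_snd had₂.symm
  -- Step 2 : global injection
  choose φ hinj hval using key
  have hΨ : Function.Injective
      (fun ci : commutatorSet G × Fin q => φ ci.1 ci.2) := by
    rintro ⟨c, i⟩ ⟨c', i'⟩ h
    simp only at h
    have hc : c = c' := by
      apply Subtype.ext
      rw [← hval c i, ← hval c' i', h]
    subst hc
    have := hinj c h
    rw [this]
  have hcount : Nat.card (commutatorSet G) * q ≤ A * A := by
    have := Nat.card_le_card_of_injective _ hΨ
    rw [Nat.card_prod, Nat.card_prod, Nat.card_eq_fintype_card (α := Fin q),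
      Fintype.card_fin] at this
    exact this
  -- Step 3 : conclude
  have hfin : Nat.card (commutatorSet G) * q ≤ B * q := by
    calc Nat.card (commutatorSet G) * q ≤ A * A := hcount
      _ = A ^ 2 := (sq A).symm
      _ ≤ q * B := hqB
      _ = B * q := Nat.mul_comm q B
  exact Nat.le_of_mul_le_mul_right hfin hq1

lemma cardCommutatorBound_mono {a b : ℕ} (h : a ≤ b) :
    Subgroup.cardCommutatorBound a ≤ Subgroup.cardCommutatorBound b := by
  unfold Subgroup.cardCommutatorBound
  rcases Nat.eq_zero_or_pos a with rfl | ha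
  · rcases Nat.eq_zero_or_pos b with rfl | hb
    · exact le_refl _
    · have h1 : 1 ≤ b ^ (2 * b) := Nat.one_le_pow _ _ hb
      have h2 : 1 ≤ (b ^ (2 * b)) ^ (b ^ (2 * b + 1) + 1) := Nat.one_le_pow _ _ h1
      simpa using h2
  · have hb : 0 < b := lt_of_lt_of_le ha h
    have h1 : a ^ (2 * a) ≤ b ^ (2 * b) :=
      calc a ^ (2 * a) ≤ b ^ (2 * a) := Nat.pow_le_pow_left h _
        _ ≤ b ^ (2 * b) := Nat.pow_le_pow_right hb (by omega)
    have h2 : a ^ (2 * a + 1) + 1 ≤ b ^ (2 * b + 1) + 1 := by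
      have : a ^ (2 * a + 1) ≤ b ^ (2 * b + 1) :=
        calc a ^ (2 * a + 1) ≤ b ^ (2 * a + 1) := Nat.pow_le_pow_left h _
          _ ≤ b ^ (2 * b + 1) := Nat.pow_le_pow_right hb (by omega)
      omega
    calc (a ^ (2 * a)) ^ (a ^ (2 * a + 1) + 1)
        ≤ (b ^ (2 * b)) ^ (a ^ (2 * a + 1) + 1) := Nat.pow_le_pow_left h1 _
      _ ≤ (b ^ (2 * b)) ^ (b ^ (2 * b + 1) + 1) :=
          Nat.pow_le_pow_right (Nat.one_le_pow _ _ hb) h2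

/-- If `G` is a finite group in which every element of prime power order has conjugacy
class of size at most `m`, then `G'` has `m`-bounded order. -/
theorem derived_bounded_of_primePower_classes :
    ∃ f : ℕ → ℕ, ∀ (G : Type) (_ : Group G) (_ : Finite G) (m : ℕ), 0 < m →
      (∀ x : G, IsPrimePow (orderOf x) → Nat.card {h : G // IsConj x h} ≤ m) →
      Nat.card (commutator G) ≤ f m := by
  refine ⟨fun m => Subgroup.cardCommutatorBound ((m ^ (m + 1)) ^ 5), ?_⟩
  intro G _ _ m hm hclass
  have hyp : ∀ x : G, IsPrimePow (orderOf x) → (Subgroup.centralizer {x}).index ≤ m := by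
    intro x hx
    rw [← conjClass_card_eq]
    exact hclass x hx
  have hall : ∀ x : G, (Subgroup.centralizer {x}).index ≤ m ^ (m + 1) := by
    intro x
    refine (index_centralizer_le hyp x).trans ?_
    refine Nat.pow_le_pow_right hm ?_
    have hsub : (orderOf x).primeFactors.filter (· ≤ m) ⊆ Finset.range (m + 1) := by
      intro p hp
      rw [Finset.mem_filter] at hp
      rw [Finset.mem_range]
      omega
    calc ((orderOf x).primeFactors.filter (· ≤ m)).card
        ≤ (Finset.range (m + 1)).card := Finset.card_le_card hsub
      _ = m + 1 := Finset.card_range _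
  have hn : 0 < m ^ (m + 1) := pow_pos hm _
  have hS := commutatorSet_card_le hn hall
  calc Nat.card (commutator G)
      ≤ Subgroup.cardCommutatorBound (Nat.card (commutatorSet G)) :=
        Subgroup.card_commutator_le_of_finite_commutatorSet G
    _ ≤ Subgroup.cardCommutatorBound ((m ^ (m + 1)) ^ 5) := cardCommutatorBound_mono hS
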